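/- Let k be a field of characteristic 0 and let A be a Poisson algebra over k whose module of Kähler differentials Ω_{A/k} is free over A with basis (dx_1, …, dx_ℓ). Then the trace map tr : A → A satisfies the cocycle identity tr({a, b}) = {a, tr(b)} − {b, tr(a)} for all a, b ∈ A. -/

import Mathlib

section TraceAux

variable {k A : Type} [Field k] [CommRing A] [Algebra k A]
  (bracket : A →ₗ[k] A →ₗ[k] A)
  {ℓ : ℕ} (x : Fin ℓ → A) (b : Module.Basis (Fin ℓ) A (Ω[A⁄k]))

open LinearMap

/-- The "Lie derivative" along `a` on Kähler differentials, defined coordinatewise. -/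
noncomputable def traceAuxL (a : A) : Ω[A⁄k] →ₗ[k] Ω[A⁄k] :=
  ∑ j : Fin ℓ,
    (((toSpanSingleton A (Ω[A⁄k]) (b j)).restrictScalars k).comp
        ((bracket a).comp ((b.coord j).restrictScalars k))
      + ((toSpanSingleton A (Ω[A⁄k]) ((KaehlerDifferential.D k A) (bracket a (x j)))).restrictScalars k).comp
        ((b.coord j).restrictScalars k))

theorem traceAuxL_apply (a : A) (ω : Ω[A⁄k]) :
    traceAuxL bracket x b a ω =
      ∑ j : Fin ℓ, ((bracket a (b.repr ω j)) • b j
        + (b.repr ω j) • (KaehlerDifferential.D k A) (bracket a (x j))) := by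
  simp [traceAuxL, LinearMap.sum_apply, Module.Basis.coord_apply, LinearMap.toSpanSingleton_apply]

variable (leibniz : ∀ a b c : A, bracket a (b * c) = bracket a b * c + b * bracket a c)

include leibniz

theorem traceAux_bracket_one (a : A) : bracket a 1 = 0 := by
  have h := leibniz a 1 1
  simp only [mul_one, one_mul] at h
  exact left_eq_add.mp h

theorem traceAuxL_smul (a f : A) (ω : Ω[A⁄k]) :
    traceAuxL bracket x b a (f • ω) = bracket a f • ω + f • traceAuxL bracket x b a ω := by
  rw [traceAuxL_apply, traceAuxL_apply]
  have hrepr : ∀ j, b.repr (f • ω) j = f * b.repr ω j := by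
    intro j; rw [map_smul]; rfl
  calc ∑ j : Fin ℓ, ((bracket a (b.repr (f • ω) j)) • b j
        + (b.repr (f • ω) j) • (KaehlerDifferential.D k A) (bracket a (x j)))
      = ∑ j : Fin ℓ, (bracket a f • ((b.repr ω j) • b j)
          + f • ((bracket a (b.repr ω j)) • b j
            + (b.repr ω j) • (KaehlerDifferential.D k A) (bracket a (x j)))) := by
        refine Finset.sum_congr rfl fun j _ => ?_
        rw [hrepr, leibniz]
        rw [smul_add, add_smul, smul_smul, smul_smul, smul_smul]
        ring_nf
        abel
    _ = bracket a f • ω + f • ∑ j : Fin ℓ, ((bracket a (b.repr ω j)) • b j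
          + (b.repr ω j) • (KaehlerDifferential.D k A) (bracket a (x j))) := by
        rw [Finset.sum_add_distrib, ← Finset.smul_sum, ← Finset.smul_sum, b.sum_repr]

theorem traceAuxL_basis (a : A) (j : Fin ℓ) :
    traceAuxL bracket x b a (b j) = (KaehlerDifferential.D k A) (bracket a (x j)) := by
  rw [traceAuxL_apply]
  rw [Finset.sum_eq_single j]
  · simp [traceAux_bracket_one bracket leibniz]
  · intro m _ hm
    simp [Finsupp.single_apply, Ne.symm hm]
  · simp

/-- The difference `z ↦ D{a,z} - L_a(Dz)` is a derivation. -/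
noncomputable def traceAuxDelta (a : A) : Derivation k A (Ω[A⁄k]) where
  toLinearMap :=
    ((KaehlerDifferential.D k A).toLinearMap.comp (bracket a))
      - (traceAuxL bracket x b a).comp (KaehlerDifferential.D k A).toLinearMap
  map_one_eq_zero' := by
    simp [traceAux_bracket_one bracket leibniz]
  leibniz' := fun z w => by
    simp only [LinearMap.sub_apply, LinearMap.comp_apply, Derivation.coeFn_coe]
    rw [leibniz, map_add, Derivation.leibniz, Derivation.leibniz, Derivation.leibniz,
      map_add, traceAuxL_smul bracket x b leibniz, traceAuxL_smul bracket x b leibniz,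
      smul_sub, smul_sub]
    abel

theorem traceAux_D_bracket (hb : ∀ i, b i = KaehlerDifferential.D k A (x i)) (a z : A) :
    (KaehlerDifferential.D k A) (bracket a z)
      = traceAuxL bracket x b a ((KaehlerDifferential.D k A) z) := by
  have hδ : ∀ w : A, traceAuxDelta bracket x b leibniz a w =
      KaehlerDifferential.D k A (bracket a w)
        - traceAuxL bracket x b a (KaehlerDifferential.D k A w) := fun w => rfl
  have hlift0 : (traceAuxDelta bracket x b leibniz a).liftKaehlerDifferential = 0 := by
    apply b.ext
    intro j
    rw [hb j, Derivation.liftKaehlerDifferential_comp_D, hδ, ← hb j,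
      traceAuxL_basis bracket x b leibniz, sub_self, LinearMap.zero_apply]
  have h1 : traceAuxDelta bracket x b leibniz a z = 0 := by
    rw [← Derivation.liftKaehlerDifferential_comp_D (traceAuxDelta bracket x b leibniz a) z,
      hlift0, LinearMap.zero_apply]
  rw [hδ] at h1
  exact sub_eq_zero.mp h1

omit leibniz in
theorem traceAux_repr_L (a : A) (ω : Ω[A⁄k]) (i : Fin ℓ) :
    b.repr (traceAuxL bracket x b a ω) i
    = bracket a (b.repr ω i)
      + ∑ j : Fin ℓ, b.repr ω j * b.repr ((KaehlerDifferential.D k A) (bracket a (x j))) i := by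
  rw [traceAuxL_apply, map_sum, Finsupp.finset_sum_apply]
  simp only [map_add, map_smul, b.repr_self, Finsupp.coe_add, Pi.add_apply,
    Finsupp.coe_smul, Pi.smul_apply, Finsupp.smul_single, smul_eq_mul, mul_one,
    Finsupp.single_apply]
  rw [Finset.sum_add_distrib]
  congr 1
  simp [Finset.sum_ite_eq']

end TraceAux


/-- With `A` a Poisson algebra over a field `k` of characteristic 0 whose Kähler
differentials are free with basis `(dx_1, …, dx_ℓ)`, the trace map
`tr(y) = Σ_i c_i(d{y, x_i})` satisfies the cocycle identity
`tr({a, b}) = {a, tr(b)} − {b, tr(a)}` for all `a, b ∈ A`. -/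
theorem trace_cocycle_identity
    (k A : Type) [Field k] [CharZero k] [CommRing A] [Algebra k A]
    (bracket : A →ₗ[k] A →ₗ[k] A)
    (alt : ∀ a : A, bracket a a = 0)
    (jacobi : ∀ a b c : A,
      bracket a (bracket b c) = bracket (bracket a b) c + bracket b (bracket a c))
    (leibniz : ∀ a b c : A, bracket a (b * c) = bracket a b * c + b * bracket a c)
    (ℓ : ℕ) (x : Fin ℓ → A) (b : Module.Basis (Fin ℓ) A (Ω[A⁄k]))
    (hb : ∀ i, b i = KaehlerDifferential.D k A (x i))
    (tr : A → A)
    (htr : ∀ y : A, tr y = ∑ i, b.repr (KaehlerDifferential.D k A (bracket y (x i))) i) :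
    ∀ a c : A, tr (bracket a c) = bracket a (tr c) - bracket c (tr a) := by
  intro a c
  set M : A → Fin ℓ → Fin ℓ → A :=
    fun y i j => b.repr (KaehlerDifferential.D k A (bracket y (x i))) j with hM
  have key := traceAux_D_bracket bracket x b leibniz hb
  have jac : ∀ i, bracket (bracket a c) (x i)
      = bracket a (bracket c (x i)) - bracket c (bracket a (x i)) := by
    intro i
    rw [jacobi a c (x i)]
    abel
  have step1 : tr (bracket a c)
      = ∑ i, ((bracket a (M c i i) + ∑ j, M c i j * M a j i)
        - (bracket c (M a i i) + ∑ j, M a i j * M c j i)) := by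
    rw [htr]
    refine Finset.sum_congr rfl fun i _ => ?_
    rw [jac i, map_sub, key a (bracket c (x i)), key c (bracket a (x i)),
      map_sub, Finsupp.sub_apply,
      traceAux_repr_L bracket x b a (KaehlerDifferential.D k A (bracket c (x i))) i,
      traceAux_repr_L bracket x b c (KaehlerDifferential.D k A (bracket a (x i))) i]
  have hswap : ∑ i, ∑ j, M c i j * M a j i = ∑ i, ∑ j, M a i j * M c j i := by
    rw [Finset.sum_comm]
    exact Finset.sum_congr rfl fun i _ => Finset.sum_congr rfl fun j _ => mul_comm _ _
  have step2 : tr (bracket a c)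
      = (∑ i, bracket a (M c i i)) - ∑ i, bracket c (M a i i) := by
    rw [step1]
    rw [Finset.sum_sub_distrib, Finset.sum_add_distrib, Finset.sum_add_distrib, hswap]
    abel
  rw [step2, htr c, htr a, map_sum, map_sum]
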